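/- Let b : ℝ → ℝ be a decreasing Lipschitz continuous function with b(0) = 0, and define F(x) = -∫_𝒪 ∫₀^{x(ξ)} b(η) dη dξ for x ∈ L²(𝒪). Then F(0) = 0, F(x) ≥ 0 for all x ∈ L²(𝒪), and the Fréchet derivative DF satisfies DF(x)(ξ) = -b(x(ξ)), so that ⟨DF(x), x⟩ = -∫_𝒪 b(x(ξ)) x(ξ) dξ ≥ 0 for all x ∈ L²(𝒪). -/

import Mathlib

open MeasureTheory

/-- For `b : ℝ → ℝ` decreasing, Lipschitz, with `b 0 = 0`, the functional
`F x = -∫_𝒪 ∫₀^{x ξ} b(η) dη dξ` on `H = L²(𝒪)` satisfies `F 0 = 0`, `F ≥ 0`, its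
gradient (Fréchet derivative identified via the inner product) at `x` is the function
`ξ ↦ -b (x ξ)`, and `⟨DF x, x⟩ = -∫ b (x ξ) * x ξ dξ ≥ 0`. -/
theorem stmt0
    {Ω : Type*} [MeasurableSpace Ω] (μ : Measure Ω) [IsFiniteMeasure μ]
    (b : ℝ → ℝ) (K : NNReal) (hb_lip : LipschitzWith K b)
    (hb_mono : Antitone b) (hb0 : b 0 = 0)
    (F : Lp ℝ 2 μ → ℝ)
    (hF : ∀ x : Lp ℝ 2 μ, F x = -∫ ξ, (∫ t in (0:ℝ)..(x ξ), b t) ∂μ) :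
    F 0 = 0 ∧ (∀ x, 0 ≤ F x) ∧
    ∀ x : Lp ℝ 2 μ, ∃ g : Lp ℝ 2 μ,
      (g : Ω → ℝ) =ᵐ[μ] (fun ξ => -(b (x ξ))) ∧
      HasGradientAt F g x ∧
      (inner ℝ g x : ℝ) = -∫ ξ, b (x ξ) * x ξ ∂μ ∧
      (0:ℝ) ≤ (inner ℝ g x : ℝ) := by
  have hbc : Continuous b := hb_lip.continuous
  have hbint : ∀ a c : ℝ, IntervalIntegrable b MeasureTheory.volume a c :=
    fun a c => hbc.intervalIntegrable a c
  -- pointwise bound on b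
  have hbabs : ∀ t : ℝ, |b t| ≤ (K : ℝ) * |t| := by
    intro t
    have := hb_lip.dist_le_mul t 0
    simpa [hb0, Real.dist_eq] using this
  -- sign of b
  have hbsign_pos : ∀ t : ℝ, 0 ≤ t → b t ≤ 0 := fun t ht => hb0 ▸ hb_mono ht
  have hbsign_neg : ∀ t : ℝ, t ≤ 0 → 0 ≤ b t := fun t ht => hb0 ▸ hb_mono ht
  -- bound on primitive
  have hΦabs : ∀ u : ℝ, |∫ t in (0:ℝ)..u, b t| ≤ (K : ℝ) * u ^ 2 := by
    intro u
    have h1 : ∀ t ∈ Set.uIoc (0:ℝ) u, ‖b t‖ ≤ (K : ℝ) * |u| := by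
      intro t ht
      have h2 : -|u| ≤ min (0:ℝ) u := le_min (by simp [abs_nonneg]) (neg_abs_le u)
      have h3 : max (0:ℝ) u ≤ |u| := max_le (abs_nonneg u) (le_abs_self u)
      have htu : |t| ≤ |u| := abs_le.2 ⟨le_of_lt (lt_of_le_of_lt h2 ht.1), ht.2.trans h3⟩
      calc ‖b t‖ = |b t| := rfl
        _ ≤ (K : ℝ) * |t| := hbabs t
        _ ≤ (K : ℝ) * |u| := by gcongr
    have H := intervalIntegral.norm_integral_le_of_norm_le_const h1
    simp only [Real.norm_eq_abs, sub_zero] at H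
    have h2 : (K : ℝ) * |u| * |u| = (K : ℝ) * u ^ 2 := by
      rw [mul_assoc, abs_mul_abs_self]; ring
    linarith
  -- nonpositivity of primitive
  have hΦnonpos : ∀ u : ℝ, (∫ t in (0:ℝ)..u, b t) ≤ 0 := by
    intro u
    rcases le_or_gt 0 u with hu | hu
    · have h1 : (0:ℝ) ≤ ∫ t in (0:ℝ)..u, -b t :=
        intervalIntegral.integral_nonneg hu (fun t ht => by
          have := hbsign_pos t ht.1
          linarith)
      rw [intervalIntegral.integral_neg] at h1
      linarith
    · have h1 : (0:ℝ) ≤ ∫ t in u..(0:ℝ), b t :=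
        intervalIntegral.integral_nonneg hu.le (fun t ht => hbsign_neg t ht.2)
      have h2 : (∫ t in (0:ℝ)..u, b t) = -∫ t in u..(0:ℝ), b t :=
        intervalIntegral.integral_symm u 0
      rw [h2]
      linarith
  -- Taylor estimate
  have hTaylor : ∀ u v : ℝ,
      |(∫ t in (0:ℝ)..(u + v), b t) - (∫ t in (0:ℝ)..u, b t) - b u * v| ≤ (K : ℝ) * v ^ 2 := by
    intro u v
    have hsub : (∫ t in (0:ℝ)..(u + v), b t) - (∫ t in (0:ℝ)..u, b t)
        = ∫ t in u..(u + v), b t :=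
      intervalIntegral.integral_interval_sub_left (hbint 0 (u + v)) (hbint 0 u)
    have hc : b u * v = ∫ t in u..(u + v), b u := by
      rw [intervalIntegral.integral_const]
      simp [mul_comm]
    have key : (∫ t in (0:ℝ)..(u + v), b t) - (∫ t in (0:ℝ)..u, b t) - b u * v
        = ∫ t in u..(u + v), (b t - b u) := by
      rw [hsub, hc, ← intervalIntegral.integral_sub (hbint u (u + v)) intervalIntegrable_const]
    rw [key]
    have h1 : ∀ t ∈ Set.uIoc u (u + v), ‖b t - b u‖ ≤ (K : ℝ) * |v| := by
      intro t ht
      have h2 : u - |v| ≤ min u (u + v) := le_min (by simp [abs_nonneg]) (by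
        have := neg_abs_le v; linarith)
      have h3 : max u (u + v) ≤ u + |v| := max_le (by simp [abs_nonneg]) (by
        have := le_abs_self v; linarith)
      have htu : |t - u| ≤ |v| := abs_le.2
        ⟨by have := lt_of_le_of_lt h2 ht.1; linarith, by have := ht.2.trans h3; linarith⟩
      calc ‖b t - b u‖ = |b t - b u| := rfl
        _ ≤ (K : ℝ) * |t - u| := by
            have := hb_lip.dist_le_mul t u
            simpa [Real.dist_eq] using this
        _ ≤ (K : ℝ) * |v| := by gcongr
    have H := intervalIntegral.norm_integral_le_of_norm_le_const h1
    simp only [Real.norm_eq_abs, add_sub_cancel_left] at H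
    have h2 : (K : ℝ) * |v| * |v| = (K : ℝ) * v ^ 2 := by
      rw [mul_assoc, abs_mul_abs_self]; ring
    linarith
  -- integrability of primitive composed with an L² function
  have hΦcont : Continuous (fun u : ℝ => ∫ t in (0:ℝ)..u, b t) :=
    intervalIntegral.continuous_primitive hbint 0
  have hIΦ : ∀ y : Lp ℝ 2 μ, Integrable (fun ξ => ∫ t in (0:ℝ)..(y ξ), b t) μ := by
    intro y
    refine Integrable.mono (((Lp.memLp y).integrable_sq).const_mul (K : ℝ))
      (hΦcont.comp_aestronglyMeasurable (Lp.aestronglyMeasurable y)) ?_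
    filter_upwards with ξ
    simp only [Real.norm_eq_abs, Function.comp]
    calc |∫ t in (0:ℝ)..(y ξ), b t| ≤ (K : ℝ) * (y ξ) ^ 2 := hΦabs _
      _ ≤ |(K : ℝ) * (y ξ) ^ 2| := le_abs_self _
  refine ⟨?_, ?_, ?_⟩
  · -- F 0 = 0
    rw [hF 0]
    have h0 : ∫ ξ, (∫ t in (0:ℝ)..((0 : Lp ℝ 2 μ) ξ), b t) ∂μ = 0 := by
      apply integral_eq_zero_of_ae
      filter_upwards [Lp.coeFn_zero ℝ 2 μ] with ξ hξ
      rw [hξ, Pi.zero_apply, intervalIntegral.integral_same]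
    rw [h0]; ring
  · -- F ≥ 0
    intro x
    rw [hF x]
    have := integral_nonpos (μ := μ) (f := fun ξ => ∫ t in (0:ℝ)..(x ξ), b t)
      (fun ξ => hΦnonpos (x ξ))
    linarith
  · intro x
    have hmx := Lp.aestronglyMeasurable x
    have hφ2 : MemLp (fun ξ => -(b (x ξ))) 2 μ := by
      refine MemLp.of_le ((Lp.memLp x).const_mul (K : ℝ))
        ((hbc.neg).comp_aestronglyMeasurable hmx) ?_
      filter_upwards with ξ
      simp only [norm_neg, Real.norm_eq_abs]
      calc |b (x ξ)| ≤ (K : ℝ) * |x ξ| := hbabs _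
        _ = |(K : ℝ)| * |x ξ| := by rw [abs_of_nonneg K.coe_nonneg]
        _ = |(K : ℝ) * x ξ| := (abs_mul _ _).symm
    set g : Lp ℝ 2 μ := hφ2.toLp _ with hgdef
    have hgφ : (g : Ω → ℝ) =ᵐ[μ] fun ξ => -(b (x ξ)) := hφ2.coeFn_toLp
    have hinner : ∀ h : Lp ℝ 2 μ, (inner ℝ g h : ℝ) = ∫ ξ, -(b (x ξ) * h ξ) ∂μ := by
      intro h
      rw [L2.inner_def]
      apply integral_congr_ae
      filter_upwards [hgφ] with ξ hξ
      simp [RCLike.inner_apply, hξ, mul_comm]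
    have hIbh : ∀ h : Lp ℝ 2 μ, Integrable (fun ξ => b (x ξ) * h ξ) μ := by
      intro h
      have h1 := (L2.integrable_inner (𝕜 := ℝ) g h).neg
      apply h1.congr
      filter_upwards [hgφ] with ξ hξ
      simp [RCLike.inner_apply, hξ, mul_comm]
    have hnorm : ∀ h : Lp ℝ 2 μ, ∫ ξ, (h ξ) ^ 2 ∂μ = ‖h‖ ^ 2 := by
      intro h
      rw [← real_inner_self_eq_norm_sq, L2.inner_def]
      exact integral_congr_ae (Filter.Eventually.of_forall fun ξ => by
        simp [RCLike.inner_apply, sq])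
    have key : ∀ h : Lp ℝ 2 μ,
        |F (x + h) - F x - (inner ℝ g h : ℝ)| ≤ (K : ℝ) * ‖h‖ ^ 2 := by
      intro h
      have hxh : ∀ᵐ ξ ∂μ, (↑↑(x + h) : Ω → ℝ) ξ = x ξ + h ξ := Lp.coeFn_add x h
      have hIA : Integrable (fun ξ => ∫ t in (0:ℝ)..(x ξ + h ξ), b t) μ :=
        (hIΦ (x + h)).congr (by filter_upwards [hxh] with ξ hξ; rw [hξ])
      have hA : ∫ ξ, (∫ t in (0:ℝ)..((x + h) ξ), b t) ∂μ
          = ∫ ξ, (∫ t in (0:ℝ)..(x ξ + h ξ), b t) ∂μ :=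
        integral_congr_ae (by filter_upwards [hxh] with ξ hξ; rw [hξ])
      have hAB : Integrable (fun ξ => (∫ t in (0:ℝ)..(x ξ + h ξ), b t)
          - (∫ t in (0:ℝ)..(x ξ), b t)) μ := hIA.sub (hIΦ x)
      have hEq : F (x + h) - F x - (inner ℝ g h : ℝ)
          = -∫ ξ, ((∫ t in (0:ℝ)..(x ξ + h ξ), b t) - (∫ t in (0:ℝ)..(x ξ), b t)
              - b (x ξ) * h ξ) ∂μ := by
        rw [hF, hF, hinner h, hA,
          integral_sub hAB (hIbh h),
          integral_sub hIA (hIΦ x), integral_neg]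
        ring
      have hIint : Integrable (fun ξ => ((∫ t in (0:ℝ)..(x ξ + h ξ), b t)
          - (∫ t in (0:ℝ)..(x ξ), b t) - b (x ξ) * h ξ)) μ :=
        hAB.sub (hIbh h)
      have hih2 := (Lp.memLp h).integrable_sq
      rw [hEq, abs_neg]
      calc |∫ ξ, ((∫ t in (0:ℝ)..(x ξ + h ξ), b t) - (∫ t in (0:ℝ)..(x ξ), b t)
              - b (x ξ) * h ξ) ∂μ|
          ≤ ∫ ξ, |(∫ t in (0:ℝ)..(x ξ + h ξ), b t) - (∫ t in (0:ℝ)..(x ξ), b t)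
              - b (x ξ) * h ξ| ∂μ := by
            simpa [Real.norm_eq_abs] using
              norm_integral_le_integral_norm (μ := μ)
                (f := fun ξ => (∫ t in (0:ℝ)..(x ξ + h ξ), b t)
                  - (∫ t in (0:ℝ)..(x ξ), b t) - b (x ξ) * h ξ)
        _ ≤ ∫ ξ, (K : ℝ) * (h ξ) ^ 2 ∂μ :=
            integral_mono hIint.abs (hih2.const_mul _)
              (fun ξ => hTaylor (x ξ) (h ξ))
        _ = (K : ℝ) * ∫ ξ, (h ξ) ^ 2 ∂μ := integral_const_mul _ _
        _ = (K : ℝ) * ‖h‖ ^ 2 := by rw [hnorm h]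
    refine ⟨g, hgφ, ?_, ?_, ?_⟩
    · rw [hasGradientAt_iff_isLittleO_nhds_zero, Asymptotics.isLittleO_iff]
      intro c hc
      rw [Metric.eventually_nhds_iff]
      refine ⟨c / ((K : ℝ) + 1), by positivity, fun h hh => ?_⟩
      have hhn : ‖h‖ < c / ((K : ℝ) + 1) := by simpa [dist_zero_right] using hh
      have h1 : ‖h‖ * ((K : ℝ) + 1) ≤ c :=
        (le_div_iff₀ (by positivity)).1 hhn.le
      have h0 := norm_nonneg h
      have hK := K.coe_nonneg
      calc ‖F (x + h) - F x - (inner ℝ g h : ℝ)‖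
          = |F (x + h) - F x - (inner ℝ g h : ℝ)| := rfl
        _ ≤ (K : ℝ) * ‖h‖ ^ 2 := key h
        _ ≤ c * ‖h‖ := by nlinarith
    · rw [hinner x, integral_neg]
    · rw [hinner x]
      have hpt : ∀ u : ℝ, 0 ≤ -(b u * u) := by
        intro u
        rcases le_or_gt 0 u with hu | hu
        · have := hbsign_pos u hu; nlinarith
        · have := hbsign_neg u hu.le; nlinarith
      exact integral_nonneg fun ξ => hpt (x ξ)
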